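/- Let H = ⟨4,5,6⟩ and let n ≥ 11 be odd. Then S(2H + nℕ₀) = {8, 10, 12, 22, n, n+10, n+12, n+22}, and any numerical semigroup H̃ with d₂(H̃) = H, n(H̃) = n, and g(H̃) = 6 + (n−1)/2 equals 2H + nℕ₀ + (n+2k)ℕ₀ for some k ∈ {1, 2, 3}. -/

import Mathlib

/-- A numerical semigroup: a submonoid of ℕ with finite complement. -/
structure NumSemigroup where
  carrier : Set ℕ
  zero_mem : 0 ∈ carrier
  add_mem : ∀ a ∈ carrier, ∀ b ∈ carrier, a + b ∈ carrier
  cofinite : carrierᶜ.Finite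

namespace NumSemigroup

/-- The genus: cardinality of the complement in ℕ. -/
noncomputable def genus (H : NumSemigroup) : ℕ := H.carrierᶜ.ncard

/-- `m` is the least positive element of `H` (so `H` is an `m`-semigroup). -/
def IsMult (H : NumSemigroup) (m : ℕ) : Prop :=
  IsLeast {x | x ∈ H.carrier ∧ 0 < x} m

/-- `c` is the conductor: the least `c` with `c + ℕ ⊆ H`. -/
def IsConductor (H : NumSemigroup) (c : ℕ) : Prop :=
  IsLeast {c | ∀ x, c ≤ x → x ∈ H.carrier} c

/-- `n` is the least odd element of `H`, i.e. `n = n(H)`. -/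
def IsLeastOdd (H : NumSemigroup) (n : ℕ) : Prop :=
  IsLeast {x | x ∈ H.carrier ∧ Odd x} n

end NumSemigroup

/-- `d₂(A) = {h/2 : h ∈ A even}`. -/
def d2 (A : Set ℕ) : Set ℕ := {x | 2 * x ∈ A}

/-- `2A + nℕ₀ = {2h + ni : h ∈ A, i ∈ ℕ₀}`. -/
def doubleAdd (A : Set ℕ) (n : ℕ) : Set ℕ :=
  {x | ∃ h ∈ A, ∃ i : ℕ, x = 2 * h + n * i}

/-- `2A + aℕ₀ + bℕ₀ = {2h + ai + bj : h ∈ A, i, j ∈ ℕ₀}`. -/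
def doubleAdd2 (A : Set ℕ) (a b : ℕ) : Set ℕ :=
  {x | ∃ h ∈ A, ∃ i : ℕ, ∃ j : ℕ, x = 2 * h + a * i + b * j}

/-- The standard basis `S(A) = {m, s₁, …, s_{m-1}}` of an `m`-semigroup,
where `sᵢ = min {h ∈ A : h ≡ i mod m}`. -/
def stdBasis (A : Set ℕ) (m : ℕ) : Set ℕ :=
  insert m {s | ∃ i, 0 < i ∧ i < m ∧ IsLeast {h | h ∈ A ∧ h % m = i} s}

/-- `A` (of genus `g`) is symmetric: `z ∈ A ↔ 2g - 1 - z ∉ A` for all integers `z`. -/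
def SymSgp (A : Set ℕ) (g : ℕ) : Prop :=
  ∀ z : ℤ, (∃ a ∈ A, (a : ℤ) = z) ↔ ¬ ∃ a ∈ A, (a : ℤ) = 2 * (g : ℤ) - 1 - z

/-- The submonoid of ℕ generated by a set, as a set: `⟨a₁,…,a_k⟩`. -/
def genSG (s : Set ℕ) : Set ℕ := (AddSubmonoid.closure s : AddSubmonoid ℕ)


def Hs : Set ℕ := {x | x = 0 ∨ x = 4 ∨ x = 5 ∨ x = 6 ∨ 8 ≤ x}

def HsM : AddSubmonoid ℕ where
  carrier := Hs
  zero_mem' := Or.inl rfl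
  add_mem' := by
    intro a b ha hb
    simp only [Hs, Set.mem_setOf_eq] at *
    omega


lemma rep456 : ∀ x, 8 ≤ x → ∃ a b c, x = 4*a + 5*b + 6*c := by
  intro x
  induction x using Nat.strong_induction_on with
  | _ x ih =>
    intro hx
    by_cases h : x ≤ 11
    · interval_cases x
      · exact ⟨2,0,0, by norm_num⟩
      · exact ⟨1,1,0, by norm_num⟩
      · exact ⟨1,0,1, by norm_num⟩
      · exact ⟨0,1,1, by norm_num⟩
    · obtain ⟨a,b,c,h⟩ := ih (x-4) (by omega) (by omega)
      exact ⟨a+1,b,c, by omega⟩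

lemma genSG_eq : genSG {4,5,6} = Hs := by
  apply subset_antisymm
  · have : AddSubmonoid.closure ({4,5,6} : Set ℕ) ≤ HsM := by
      apply AddSubmonoid.closure_le.mpr
      intro x hx
      simp only [Set.mem_insert_iff, Set.mem_singleton_iff] at hx
      rcases hx with rfl | rfl | rfl
      · exact Or.inr (Or.inl rfl)
      · exact Or.inr (Or.inr (Or.inl rfl))
      · exact Or.inr (Or.inr (Or.inr (Or.inl rfl)))
    exact this
  · intro x hx
    have h4 : (4:ℕ) ∈ AddSubmonoid.closure ({4,5,6} : Set ℕ) :=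
      AddSubmonoid.subset_closure (by simp)
    have h5 : (5:ℕ) ∈ AddSubmonoid.closure ({4,5,6} : Set ℕ) :=
      AddSubmonoid.subset_closure (by simp)
    have h6 : (6:ℕ) ∈ AddSubmonoid.closure ({4,5,6} : Set ℕ) :=
      AddSubmonoid.subset_closure (by simp)
    rcases hx with rfl | rfl | rfl | rfl | h8
    · exact AddSubmonoid.zero_mem _
    · exact h4
    · exact h5
    · exact h6
    · obtain ⟨a,b,c,rfl⟩ := rep456 x h8
      have := AddSubmonoid.add_mem _ (AddSubmonoid.add_mem _
        (AddSubmonoid.nsmul_mem _ h4 a) (AddSubmonoid.nsmul_mem _ h5 b))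
        (AddSubmonoid.nsmul_mem _ h6 c)
      simpa [smul_eq_mul, mul_comm, genSG] using this


lemma memD {n : ℕ} (hodd : n % 2 = 1) (hn : 11 ≤ n) (x : ℕ) :
    x ∈ doubleAdd Hs n ↔
      (x % 2 = 0 ∧ (x = 0 ∨ x = 8 ∨ x = 10 ∨ x = 12 ∨ 16 ≤ x)) ∨
      (x % 2 = 1 ∧ (x = n ∨ x = n+8 ∨ x = n+10 ∨ x = n+12 ∨ n+16 ≤ x)) := by
  constructor
  · rintro ⟨h, hh, i, rfl⟩
    simp only [Hs, Set.mem_setOf_eq] at hh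
    rcases Nat.even_or_odd i with ⟨j, rfl⟩ | ⟨j, rfl⟩
    · have hnj : n * (j + j) = 2 * (n * j) := by ring
      rcases Nat.eq_zero_or_pos j with rfl | hj
      · simp only [Nat.mul_zero, Nat.add_zero]; omega
      · have : n ≤ n * j := Nat.le_mul_of_pos_right n hj
        omega
    · have hnj : n * (2 * j + 1) = 2 * (n * j) + n := by ring
      rcases Nat.eq_zero_or_pos j with rfl | hj
      · simp only [Nat.mul_zero] at hnj; omega
      · have : n ≤ n * j := Nat.le_mul_of_pos_right n hj
        omega
  · rintro (⟨he, hx⟩ | ⟨ho, hx⟩)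
    · exact ⟨x / 2, by simp only [Hs, Set.mem_setOf_eq]; omega, 0, by omega⟩
    · exact ⟨(x - n) / 2, by simp only [Hs, Set.mem_setOf_eq]; omega, 1, by omega⟩

set_option maxHeartbeats 2000000 in
lemma part1 {n : ℕ} (hodd : n % 2 = 1) (hn : 11 ≤ n) :
    stdBasis (doubleAdd Hs n) 8 =
      ({8, 10, 12, 22, n, n + 10, n + 12, n + 22} : Set ℕ) := by
  have M := memD hodd hn
  have m10 : (10:ℕ) ∈ doubleAdd Hs n := (M 10).mpr (by omega)
  have m12 : (12:ℕ) ∈ doubleAdd Hs n := (M 12).mpr (by omega)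
  have m22 : (22:ℕ) ∈ doubleAdd Hs n := (M 22).mpr (by omega)
  have mn : n ∈ doubleAdd Hs n := (M n).mpr (by omega)
  have mn10 : n + 10 ∈ doubleAdd Hs n := (M (n+10)).mpr (by omega)
  have mn12 : n + 12 ∈ doubleAdd Hs n := (M (n+12)).mpr (by omega)
  have mn22 : n + 22 ∈ doubleAdd Hs n := (M (n+22)).mpr (by omega)
  ext s
  simp only [stdBasis, Set.mem_insert_iff, Set.mem_setOf_eq, IsLeast, lowerBounds,
    Set.mem_singleton_iff]
  constructor
  · rintro (rfl | ⟨i, hi0, hi8, ⟨⟨hsD, hsmod⟩, hlb⟩⟩)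
    · tauto
    · have hs := (M s).mp hsD
      rcases hs with ⟨hp, hcase⟩ | ⟨hp, hcase⟩
      · -- even case: i ∈ {2,4,6}
        rcases (show i = 2 ∨ i = 4 ∨ i = 6 by omega) with rfl | rfl | rfl
        · have := hlb ⟨m10, by omega⟩; omega
        · have := hlb ⟨m12, by omega⟩; omega
        · have := hlb ⟨m22, by omega⟩; omega
      · -- odd case
        by_cases h1 : s % 8 = n % 8
        · have := hlb ⟨mn, by omega⟩; omega
        · by_cases h2 : s % 8 = (n + 10) % 8
          · have := hlb ⟨mn10, by omega⟩; omega
          · by_cases h3 : s % 8 = (n + 12) % 8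
            · have := hlb ⟨mn12, by omega⟩; omega
            · have h4 : s % 8 = (n + 22) % 8 := by omega
              have := hlb ⟨mn22, by omega⟩; omega
  · rintro (rfl | rfl | rfl | rfl | h | h | h | h) <;> try subst s
    · exact Or.inl rfl
    · refine Or.inr ⟨2, by omega, by omega, ⟨m10, by omega⟩, ?_⟩
      rintro h ⟨hD, hm⟩; have := (M h).mp hD; omega
    · refine Or.inr ⟨4, by omega, by omega, ⟨m12, by omega⟩, ?_⟩
      rintro h ⟨hD, hm⟩; have := (M h).mp hD; omega
    · refine Or.inr ⟨6, by omega, by omega, ⟨m22, by omega⟩, ?_⟩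
      rintro h ⟨hD, hm⟩; have := (M h).mp hD; omega
    · refine Or.inr ⟨n % 8, by omega, by omega, ⟨mn, by omega⟩, ?_⟩
      rintro h ⟨hD, hm⟩; have := (M h).mp hD; omega
    · refine Or.inr ⟨(n + 10) % 8, by omega, by omega, ⟨mn10, by omega⟩, ?_⟩
      rintro h ⟨hD, hm⟩; have := (M h).mp hD; omega
    · refine Or.inr ⟨(n + 12) % 8, by omega, by omega, ⟨mn12, by omega⟩, ?_⟩
      rintro h ⟨hD, hm⟩; have := (M h).mp hD; omega
    · refine Or.inr ⟨(n + 22) % 8, by omega, by omega, ⟨mn22, by omega⟩, ?_⟩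
      rintro h ⟨hD, hm⟩; have := (M h).mp hD; omega

lemma card_odd (n : ℕ) : ((Finset.range n).filter (fun x => x % 2 = 1)).card = n / 2 := by
  induction n with
  | zero => simp
  | succ n ih =>
    rw [Finset.range_add_one, Finset.filter_insert]
    by_cases h : n % 2 = 1
    · rw [if_pos h, Finset.card_insert_of_notMem (by simp)]
      omega
    · rw [if_neg h]; omega

lemma gaps_card (n : ℕ) (hn : 11 ≤ n) (E : Finset ℕ) (hE : ∀ x ∈ E, n < x)
    (hEodd : ∀ x ∈ E, x % 2 = 1) :
    (insert 2 (insert 4 (insert 6 (insert 14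
      (E ∪ (Finset.range n).filter (fun x => x % 2 = 1))))) : Finset ℕ).card
      = 4 + E.card + n / 2 := by
  have nm : ∀ y : ℕ, y % 2 = 0 →
      y ∉ E ∪ (Finset.range n).filter (fun x => x % 2 = 1) := by
    intro y hy2
    simp only [Finset.mem_union, Finset.mem_filter, Finset.mem_range]
    rintro (h | h)
    · exact absurd (hEodd y h) (by omega)
    · omega
  rw [Finset.card_insert_of_notMem (by
      simp only [Finset.mem_insert]
      push_neg
      exact ⟨by omega, by omega, by omega, nm 2 rfl⟩)]
  rw [Finset.card_insert_of_notMem (by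
      simp only [Finset.mem_insert]
      push_neg
      exact ⟨by omega, by omega, nm 4 rfl⟩)]
  rw [Finset.card_insert_of_notMem (by
      simp only [Finset.mem_insert]
      push_neg
      exact ⟨by omega, nm 6 rfl⟩)]
  rw [Finset.card_insert_of_notMem (nm 14 rfl)]
  rw [Finset.card_union_of_disjoint (by
      rw [Finset.disjoint_left]
      intro a ha ha'
      simp only [Finset.mem_filter, Finset.mem_range] at ha'
      exact absurd (hE a ha) (by omega))]
  rw [card_odd]
  omega

lemma memHs (y : ℕ) (h : y = 0 ∨ y = 4 ∨ y = 5 ∨ y = 6 ∨ 8 ≤ y) : y ∈ Hs := h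

lemma finalEq {n k : ℕ} (hodd : n % 2 = 1) (hn : 11 ≤ n) (Ht : NumSemigroup)
    (heven : ∀ x, x % 2 = 0 → (x ∈ Ht.carrier ↔ (x = 0 ∨ x = 8 ∨ x = 10 ∨ x = 12 ∨ 16 ≤ x)))
    (hnC : n ∈ Ht.carrier) (hlow : ∀ x ∈ Ht.carrier, x % 2 = 1 → n ≤ x)
    (hk1 : 1 ≤ k) (hk3 : k ≤ 3) (hbk : n + 2 * k ∈ Ht.carrier)
    (hno : ∀ j, 1 ≤ j → j ≤ 3 → j ≠ k → n + 2 * j ∉ Ht.carrier) :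
    Ht.carrier = doubleAdd2 Hs n (n + 2 * k) := by
  apply subset_antisymm
  · intro x hx
    rcases Nat.even_or_odd x with hxe | hxo
    · have hx0 : x % 2 = 0 := Nat.even_iff.mp hxe
      have hd := (heven x hx0).mp hx
      exact ⟨x / 2, memHs _ (by omega), 0, 0, by omega⟩
    · have hx1 : x % 2 = 1 := Nat.odd_iff.mp hxo
      have hxn : n ≤ x := hlow x hx hx1
      have hcases : x - n = 0 ∨ x - n = 2 ∨ x - n = 4 ∨ x - n = 6 ∨ x - n = 8 ∨
          x - n = 10 ∨ x - n = 12 ∨ x - n = 14 ∨ 16 ≤ x - n := by omega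
      rcases hcases with h | h | h | h | h | h | h | h | h
      · exact ⟨0, memHs _ (by omega), 1, 0, by omega⟩
      · by_cases hk : k = 1
        · exact ⟨0, memHs _ (by omega), 0, 1, by omega⟩
        · exact absurd (show n + 2 * 1 ∈ Ht.carrier by rwa [show n + 2 * 1 = x by omega])
            (hno 1 (by omega) (by omega) (by omega))
      · by_cases hk : k = 2
        · exact ⟨0, memHs _ (by omega), 0, 1, by omega⟩
        · exact absurd (show n + 2 * 2 ∈ Ht.carrier by rwa [show n + 2 * 2 = x by omega])
            (hno 2 (by omega) (by omega) (by omega))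
      · by_cases hk : k = 3
        · exact ⟨0, memHs _ (by omega), 0, 1, by omega⟩
        · exact absurd (show n + 2 * 3 ∈ Ht.carrier by rwa [show n + 2 * 3 = x by omega])
            (hno 3 (by omega) (by omega) (by omega))
      · exact ⟨4, memHs _ (by omega), 1, 0, by omega⟩
      · exact ⟨5, memHs _ (by omega), 1, 0, by omega⟩
      · exact ⟨6, memHs _ (by omega), 1, 0, by omega⟩
      · exact ⟨7 - k, memHs _ (by omega), 0, 1, by omega⟩
      · exact ⟨(x - n) / 2, memHs _ (by omega), 1, 0, by omega⟩
  · rintro x ⟨h, hh, i, j, rfl⟩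
    simp only [Hs, Set.mem_setOf_eq] at hh
    have h2h : 2 * h ∈ Ht.carrier := (heven (2 * h) (by omega)).mpr (by omega)
    have hmul : ∀ y ∈ Ht.carrier, ∀ m : ℕ, y * m ∈ Ht.carrier := by
      intro y hy m
      induction m with
      | zero => simpa using Ht.zero_mem
      | succ m ih =>
        have := Ht.add_mem _ ih _ hy
        rwa [show y * m + y = y * (m + 1) by ring] at this
    exact Ht.add_mem _ (Ht.add_mem _ h2h _ (hmul n hnC i)) _ (hmul (n + 2 * k) hbk j)

set_option maxHeartbeats 2000000 in
lemma part2 {n : ℕ} (hodd : n % 2 = 1) (hn : 11 ≤ n) (Ht : NumSemigroup)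
    (hd2 : d2 Ht.carrier = Hs) (hlo : Ht.IsLeastOdd n)
    (hg : Ht.genus = 6 + (n - 1) / 2) :
    ∃ k, k ∈ ({1, 2, 3} : Set ℕ) ∧ Ht.carrier = doubleAdd2 Hs n (n + 2 * k) := by
  have h2 : ∀ x : ℕ, 2 * x ∈ Ht.carrier ↔ x ∈ Hs := fun x => Set.ext_iff.mp hd2 x
  have heven : ∀ x, x % 2 = 0 →
      (x ∈ Ht.carrier ↔ (x = 0 ∨ x = 8 ∨ x = 10 ∨ x = 12 ∨ 16 ≤ x)) := by
    intro x hx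
    have hx2 : 2 * (x / 2) = x := by omega
    constructor
    · intro h
      have := (h2 (x / 2)).mp (by rwa [hx2])
      simp only [Hs, Set.mem_setOf_eq] at this
      omega
    · intro h
      have := (h2 (x / 2)).mpr (memHs _ (by omega))
      rwa [hx2] at this
  obtain ⟨⟨hnC, hnodd⟩, hlb⟩ := hlo
  have hlow : ∀ x ∈ Ht.carrier, x % 2 = 1 → n ≤ x := fun x hx h =>
    hlb ⟨hx, Nat.odd_iff.mpr h⟩
  have hnE : ∀ e, (e = 0 ∨ e = 8 ∨ e = 10 ∨ e = 12 ∨ (e % 2 = 0 ∧ 16 ≤ e)) →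
      n + e ∈ Ht.carrier := by
    intro e he
    exact Ht.add_mem n hnC e ((heven e (by omega)).mpr (by omega))
  have hcompl : ∀ x, x ∉ Ht.carrier ↔ (x = 2 ∨ x = 4 ∨ x = 6 ∨ x = 14 ∨
      (x % 2 = 1 ∧ x < n) ∨
      (x = n + 2 ∧ n + 2 ∉ Ht.carrier) ∨ (x = n + 4 ∧ n + 4 ∉ Ht.carrier) ∨
      (x = n + 6 ∧ n + 6 ∉ Ht.carrier) ∨ (x = n + 14 ∧ n + 14 ∉ Ht.carrier)) := by
    intro x
    constructor
    · intro hx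
      rcases Nat.even_or_odd x with hxe | hxo
      · have hx0 : x % 2 = 0 := Nat.even_iff.mp hxe
        have hD : ¬(x = 0 ∨ x = 8 ∨ x = 10 ∨ x = 12 ∨ 16 ≤ x) :=
          fun d => hx ((heven x hx0).mpr d)
        have : x = 2 ∨ x = 4 ∨ x = 6 ∨ x = 14 := by omega
        rcases this with rfl | rfl | rfl | rfl
        · exact Or.inl rfl
        · exact Or.inr (Or.inl rfl)
        · exact Or.inr (Or.inr (Or.inl rfl))
        · exact Or.inr (Or.inr (Or.inr (Or.inl rfl)))
      · have hx1 : x % 2 = 1 := Nat.odd_iff.mp hxo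
        by_cases hxn : x < n
        · exact Or.inr (Or.inr (Or.inr (Or.inr (Or.inl ⟨hx1, hxn⟩))))
        · have hnx : n ≤ x := by omega
          have hd : ¬(x - n = 0 ∨ x - n = 8 ∨ x - n = 10 ∨ x - n = 12 ∨
              ((x - n) % 2 = 0 ∧ 16 ≤ x - n)) := by
            intro hc
            apply hx
            have := hnE (x - n) hc
            rwa [Nat.add_sub_cancel' hnx] at this
          have hxd : x = n + 2 ∨ x = n + 4 ∨ x = n + 6 ∨ x = n + 14 := by omega
          rcases hxd with h | h | h | h
          · exact Or.inr (Or.inr (Or.inr (Or.inr (Or.inr (Or.inl ⟨h, h ▸ hx⟩)))))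
          · exact Or.inr (Or.inr (Or.inr (Or.inr (Or.inr (Or.inr (Or.inl ⟨h, h ▸ hx⟩))))))
          · exact Or.inr (Or.inr (Or.inr (Or.inr (Or.inr (Or.inr (Or.inr (Or.inl ⟨h, h ▸ hx⟩)))))))
          · exact Or.inr (Or.inr (Or.inr (Or.inr (Or.inr (Or.inr (Or.inr (Or.inr ⟨h, h ▸ hx⟩)))))))
    · rintro (rfl | rfl | rfl | rfl | ⟨h1, h2'⟩ | ⟨rfl, h⟩ | ⟨rfl, h⟩ | ⟨rfl, h⟩ | ⟨rfl, h⟩)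
      · intro hC; have := (heven 2 rfl).mp hC; omega
      · intro hC; have := (heven 4 rfl).mp hC; omega
      · intro hC; have := (heven 6 rfl).mp hC; omega
      · intro hC; have := (heven 14 rfl).mp hC; omega
      · intro hC; exact absurd (hlow x hC h1) (by omega)
      · exact h
      · exact h
      · exact h
      · exact h
  have h14 : (n + 2 ∈ Ht.carrier ∨ n + 4 ∈ Ht.carrier ∨ n + 6 ∈ Ht.carrier) →
      n + 14 ∈ Ht.carrier := by
    rintro (h | h | h)
    · have := Ht.add_mem _ h 12 ((heven 12 rfl).mpr (by omega))
      rwa [show n + 2 + 12 = n + 14 by omega] at this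
    · have := Ht.add_mem _ h 10 ((heven 10 rfl).mpr (by omega))
      rwa [show n + 4 + 10 = n + 14 by omega] at this
    · have := Ht.add_mem _ h 8 ((heven 8 rfl).mpr (by omega))
      rwa [show n + 6 + 8 = n + 14 by omega] at this
  -- generic genus computation for contradiction cases
  have hgen : ∀ E : Finset ℕ, (∀ x ∈ E, n < x) → (∀ x ∈ E, x % 2 = 1) →
      Ht.carrierᶜ = ↑(insert 2 (insert 4 (insert 6 (insert 14
        (E ∪ (Finset.range n).filter (fun x => x % 2 = 1)))))) →
      4 + E.card + n / 2 = 6 + (n - 1) / 2 := by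
    intro E hE hEodd hEq
    have := hg
    rw [NumSemigroup.genus, hEq, Set.ncard_coe_finset, gaps_card n hn E hE hEodd] at this
    exact this
  by_cases hb1 : n + 2 ∈ Ht.carrier
  · by_cases hb2 : n + 4 ∈ Ht.carrier
    · -- contradiction: too few gaps
      exfalso
      have h14C := h14 (Or.inl hb1)
      by_cases hb3 : n + 6 ∈ Ht.carrier
      · have := hgen ∅ (by simp) (by simp) (by
          ext x
          rw [Set.mem_compl_iff, hcompl x]
          simp [hb1, hb2, hb3, h14C, Finset.mem_coe, Finset.mem_filter, Finset.mem_range]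
          omega)
        simp at this; omega
      · have := hgen {n + 6} (by intro x hx; simp at hx; omega) (by intro x hx; simp at hx; omega) (by
          ext x
          rw [Set.mem_compl_iff, hcompl x]
          simp [hb1, hb2, hb3, h14C, Finset.mem_coe, Finset.mem_filter, Finset.mem_range]
          omega)
        simp at this; omega
    · by_cases hb3 : n + 6 ∈ Ht.carrier
      · exfalso
        have h14C := h14 (Or.inl hb1)
        have := hgen {n + 4} (by intro x hx; simp at hx; omega) (by intro x hx; simp at hx; omega) (by
          ext x
          rw [Set.mem_compl_iff, hcompl x]
          simp [hb1, hb2, hb3, h14C, Finset.mem_coe, Finset.mem_filter, Finset.mem_range]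
          omega)
        simp at this; omega
      · -- k = 1
        refine ⟨1, by simp, finalEq hodd hn Ht heven hnC hlow (by omega) (by omega)
          (by rwa [show n + 2 * 1 = n + 2 by omega]) ?_⟩
        intro j hj1 hj3 hjk
        rcases (show j = 2 ∨ j = 3 by omega) with rfl | rfl
        · rwa [show n + 2 * 2 = n + 4 by omega]
        · rwa [show n + 2 * 3 = n + 6 by omega]
  · by_cases hb2 : n + 4 ∈ Ht.carrier
    · by_cases hb3 : n + 6 ∈ Ht.carrier
      · exfalso
        have h14C := h14 (Or.inr (Or.inl hb2))
        have := hgen {n + 2} (by intro x hx; simp at hx; omega) (by intro x hx; simp at hx; omega) (by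
          ext x
          rw [Set.mem_compl_iff, hcompl x]
          simp [hb1, hb2, hb3, h14C, Finset.mem_coe, Finset.mem_filter, Finset.mem_range]
          omega)
        simp at this; omega
      · -- k = 2
        refine ⟨2, by simp, finalEq hodd hn Ht heven hnC hlow (by omega) (by omega)
          (by rwa [show n + 2 * 2 = n + 4 by omega]) ?_⟩
        intro j hj1 hj3 hjk
        rcases (show j = 1 ∨ j = 3 by omega) with rfl | rfl
        · rwa [show n + 2 * 1 = n + 2 by omega]
        · rwa [show n + 2 * 3 = n + 6 by omega]
    · by_cases hb3 : n + 6 ∈ Ht.carrier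
      · -- k = 3
        refine ⟨3, by simp, finalEq hodd hn Ht heven hnC hlow (by omega) (by omega)
          (by rwa [show n + 2 * 3 = n + 6 by omega]) ?_⟩
        intro j hj1 hj3 hjk
        rcases (show j = 1 ∨ j = 2 by omega) with rfl | rfl
        · rwa [show n + 2 * 1 = n + 2 by omega]
        · rwa [show n + 2 * 2 = n + 4 by omega]
      · -- none: contradiction
        exfalso
        by_cases hb4 : n + 14 ∈ Ht.carrier
        · have := hgen {n + 2, n + 4, n + 6} (by intro x hx; simp at hx; omega) (by intro x hx; simp at hx; omega) (by
            ext x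
            rw [Set.mem_compl_iff, hcompl x]
            simp [hb1, hb2, hb3, hb4, Finset.mem_coe, Finset.mem_filter, Finset.mem_range]
            omega)
          have hc : ({n + 2, n + 4, n + 6} : Finset ℕ).card = 3 := by
            rw [Finset.card_insert_of_notMem (by simp only [Finset.mem_insert, Finset.mem_singleton]; omega),
              Finset.card_insert_of_notMem (by simp only [Finset.mem_insert, Finset.mem_singleton]; omega)]
            rfl
          omega
        · have := hgen {n + 2, n + 4, n + 6, n + 14} (by intro x hx; simp at hx; omega) (by intro x hx; simp at hx; omega) (by
            ext x
            rw [Set.mem_compl_iff, hcompl x]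
            simp [hb1, hb2, hb3, hb4, Finset.mem_coe, Finset.mem_filter, Finset.mem_range]
            omega)
          have hc : ({n + 2, n + 4, n + 6, n + 14} : Finset ℕ).card = 4 := by
            rw [Finset.card_insert_of_notMem (by simp only [Finset.mem_insert, Finset.mem_singleton]; omega),
              Finset.card_insert_of_notMem (by simp only [Finset.mem_insert, Finset.mem_singleton]; omega),
              Finset.card_insert_of_notMem (by simp only [Finset.mem_insert, Finset.mem_singleton]; omega)]
            rfl
          omega

theorem stmt16 (n : ℕ) (hodd : Odd n) (hn : 11 ≤ n) :
    stdBasis (doubleAdd (genSG {4, 5, 6}) n) 8 =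
      {8, 10, 12, 22, n, n + 10, n + 12, n + 22} ∧
    ∀ Ht : NumSemigroup, d2 Ht.carrier = genSG {4, 5, 6} → Ht.IsLeastOdd n →
      Ht.genus = 6 + (n - 1) / 2 →
      ∃ k, k ∈ ({1, 2, 3} : Set ℕ) ∧
        Ht.carrier = doubleAdd2 (genSG {4, 5, 6}) n (n + 2 * k) := by
  have hodd' := Nat.odd_iff.mp hodd
  rw [genSG_eq]
  exact ⟨part1 hodd' hn, fun Ht hd2 hlo hg => part2 hodd' hn Ht hd2 hlo hg⟩
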